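/- Fix μ0, μ1 > 0, ω̃ > 0 and ω̃0, ω̃1 ∈ ℝ, and set d_j := ω̃_j² − ω̃² for j ∈ {0,1}. If X ∈ C²([0,1],ℝ) is not identically zero and satisfies X''(x) = λ·X(x) on [0,1], X'(0) = μ0·(λ + d0)·X(0) and X'(1) = −μ1·(λ + d1)·X(1) for some λ ∈ ℝ, then λ < ω̃². (Equivalently, all the frequencies √(ω̃² − λ_n) of the normal modes are real and positive.) -/

import Mathlib

open Real Set

/-- With d_j = ω̃_j² - ω̃², every eigenvalue λ of the
string–point-mass problem with a nontrivial C² eigenfunction satisfies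
λ < ω̃². -/
theorem eigenvalues_bounded_above
    (μ0 μ1 ωt ω0 ω1 d0 d1 : ℝ) (hμ0 : 0 < μ0) (hμ1 : 0 < μ1) (hωt : 0 < ωt)
    (hd0 : d0 = ω0^2 - ωt^2) (hd1 : d1 = ω1^2 - ωt^2)
    (lam : ℝ) (X : ℝ → ℝ) (hX : ContDiff ℝ 2 X)
    (hode : ∀ x ∈ Icc (0:ℝ) 1, deriv (deriv X) x = lam * X x)
    (hbc0 : deriv X 0 = μ0 * (lam + d0) * X 0)
    (hbc1 : deriv X 1 = -μ1 * (lam + d1) * X 1)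
    (hne : ∃ x ∈ Icc (0:ℝ) 1, X x ≠ 0) :
    lam < ωt^2 := by
  by_contra hcon
  push_neg at hcon
  have hlam : 0 < lam := lt_of_lt_of_le (by positivity) hcon
  -- basic regularity facts
  have hXdiff : Differentiable ℝ X := hX.differentiable (by norm_num)
  have hXcont : Continuous X := hX.continuous
  have hX'cd : ContDiff ℝ 1 (deriv X) := by
    have h2 : ContDiff ℝ ((1:ℕ) + 1) X := by exact_mod_cast hX
    exact (contDiff_succ_iff_deriv.mp h2).2.2
  have hX'diff : Differentiable ℝ (deriv X) := hX'cd.differentiable (by norm_num)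
  have hX'cont : Continuous (deriv X) := hX'cd.continuous
  have hX''cont : Continuous (deriv (deriv X)) := by
    have : ∀ x, deriv (deriv X) x = lam * X x ∨ True := fun _ => Or.inr trivial
    exact hX'cd.continuous_deriv le_rfl
  -- integration by parts
  have hu : ∀ x ∈ uIcc (0:ℝ) 1, HasDerivAt X (deriv X x) x :=
    fun x _ => (hXdiff x).hasDerivAt
  have hv : ∀ x ∈ uIcc (0:ℝ) 1, HasDerivAt (deriv X) (deriv (deriv X) x) x :=
    fun x _ => (hX'diff x).hasDerivAt
  have hibp : ∫ x in (0:ℝ)..1, X x * deriv (deriv X) x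
      = X 1 * deriv X 1 - X 0 * deriv X 0 - ∫ x in (0:ℝ)..1, deriv X x * deriv X x :=
    intervalIntegral.integral_mul_deriv_eq_deriv_mul hu hv
      (hX'cont.intervalIntegrable 0 1) (hX''cont.intervalIntegrable 0 1)
  -- rewrite the LHS using the ODE
  have huIcc : uIcc (0:ℝ) 1 = Icc (0:ℝ) 1 := uIcc_of_le zero_le_one
  have hL : ∫ x in (0:ℝ)..1, X x * deriv (deriv X) x
      = lam * ∫ x in (0:ℝ)..1, (X x)^2 := by
    rw [← intervalIntegral.integral_const_mul]
    apply intervalIntegral.integral_congr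
    intro x hx
    rw [huIcc] at hx
    simp only [hode x hx]
    ring
  set I := ∫ x in (0:ℝ)..1, (X x)^2 with hI
  set J := ∫ x in (0:ℝ)..1, deriv X x * deriv X x with hJ
  have hInonneg : 0 ≤ I :=
    intervalIntegral.integral_nonneg zero_le_one (fun x _ => sq_nonneg _)
  have hJnonneg : 0 ≤ J :=
    intervalIntegral.integral_nonneg zero_le_one (fun x _ => mul_self_nonneg _)
  have hkey : lam * I = -μ1 * (lam + d1) * (X 1)^2 - μ0 * (lam + d0) * (X 0)^2 - J := by
    rw [← hL, hibp, hbc0, hbc1]; ring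
  have hlamd0 : 0 ≤ lam + d0 := by nlinarith [sq_nonneg ω0]
  have hlamd1 : 0 ≤ lam + d1 := by nlinarith [sq_nonneg ω1]
  have h0' : 0 ≤ μ0 * (lam + d0) * (X 0)^2 :=
    mul_nonneg (mul_nonneg hμ0.le hlamd0) (sq_nonneg _)
  have h1' : 0 ≤ μ1 * (lam + d1) * (X 1)^2 :=
    mul_nonneg (mul_nonneg hμ1.le hlamd1) (sq_nonneg _)
  have hIzero : I = 0 := by nlinarith
  -- from ∫ X² = 0 and continuity, X vanishes on [0,1]
  have hae : (fun x => (X x)^2) =ᵐ[MeasureTheory.volume.restrict (Ioc (0:ℝ) 1)] 0 := by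
    rw [← intervalIntegral.integral_eq_zero_iff_of_le_of_nonneg_ae zero_le_one
      (Filter.Eventually.of_forall fun x => sq_nonneg _)
      ((hXcont.pow 2).intervalIntegrable 0 1)]
    exact hIzero
  rw [MeasureTheory.restrict_Ioc_eq_restrict_Icc] at hae
  have heq : EqOn (fun x => (X x)^2) 0 (Icc (0:ℝ) 1) :=
    MeasureTheory.Measure.eqOn_Icc_of_ae_eq MeasureTheory.volume (by norm_num) hae
      (hXcont.pow 2).continuousOn continuousOn_const
  obtain ⟨x0, hx0, hXx0⟩ := hne
  exact hXx0 (pow_eq_zero_iff (n := 2) (by norm_num) |>.mp (heq hx0))
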